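/- arXiv:2604.25151 — 4 statements merged into one kernel-verified Lean document; each statement's English description precedes it below -/
import Mathlib

section
/- Let F(z) = z^4/(1 − z^2) + z^9/(1 − z^3), with coefficient sequence (a_n). Then a_p = 0 for every prime p, yet there do not exist an integer d > 1, a polynomial P(z), and a rational power series G such that F(z) = P(z) + G(z^d) as formal power series. -/
/-- A formal power series `F` is *rational* if there are polynomials `P, Q` with
`Q(0) ≠ 0` such that `Q * F = P` as formal power series. -/
def IsRationalPS (F : PowerSeries ℂ) : Prop :=
  ∃ (P Q : Polynomial ℂ), Q.coeff 0 ≠ 0 ∧ (Q : PowerSeries ℂ) * F = (P : PowerSeries ℂ)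

/-- For `G(z) = ∑ g_k z^k`, `substPow G d` is the power series `G(z^d) = ∑ g_k z^{d k}`. -/
noncomputable def substPow (G : PowerSeries ℂ) (d : ℕ) : PowerSeries ℂ :=
  PowerSeries.mk fun n => if d ∣ n then PowerSeries.coeff (n / d) G else 0

/-- The coefficients of `F(z) = z^4/(1 - z^2) + z^9/(1 - z^3)`:
`a n = [n ≥ 4 and 2 ∣ n] + [n ≥ 9 and 3 ∣ n]`. -/
noncomputable def exCoeff (n : ℕ) : ℂ :=
  (if 4 ≤ n ∧ 2 ∣ n then 1 else 0) + (if 9 ≤ n ∧ 3 ∣ n then 1 else 0)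

/-- The coefficients of `F(z) = z^4/(1-z^2) + z^9/(1-z^3)` vanish at every prime
index, yet `F` is not of the form `P(z) + G(z^d)` for a single `d > 1`, a polynomial
`P`, and a rational power series `G`. -/
theorem stmt_5 :
    (∀ p : ℕ, Nat.Prime p → exCoeff p = 0) ∧
    ¬ ∃ (d : ℕ) (P : Polynomial ℂ) (G : PowerSeries ℂ), 1 < d ∧ IsRationalPS G ∧
        PowerSeries.mk exCoeff = (P : PowerSeries ℂ) + substPow G d := by
  constructor
  · intro p hp
    unfold exCoeff
    rw [if_neg, if_neg, add_zero]
    · rintro ⟨h9, h3⟩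
      rcases (Nat.Prime.eq_one_or_self_of_dvd hp 3 h3) with h | h <;> omega
    · rintro ⟨h4, h2⟩
      rcases (Nat.Prime.eq_one_or_self_of_dvd hp 2 h2) with h | h <;> omega
  · rintro ⟨d, P, G, hd, -, hF⟩
    obtain ⟨n, hn1, hn2, hdn⟩ : ∃ n, exCoeff n ≠ 0 ∧ P.natDegree < n ∧ ¬ d ∣ n := by
      by_cases h2 : 2 ∣ d
      · refine ⟨6 * P.natDegree + 9, ?_, by omega, ?_⟩
        · unfold exCoeff
          rw [if_neg (by omega), if_pos ⟨by omega, by omega⟩]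
          norm_num
        · intro hdvd
          have := h2.trans hdvd
          omega
      · have hd3 : 3 ≤ d := by omega
        refine ⟨2 * d * (P.natDegree + 1) + 2, ?_, ?_, ?_⟩
        · unfold exCoeff
          have h4 : 4 ≤ 2 * d * (P.natDegree + 1) + 2 := by nlinarith
          rw [if_pos ⟨h4, ⟨d * (P.natDegree + 1) + 1, by ring⟩⟩]
          by_cases h3 : 9 ≤ 2 * d * (P.natDegree + 1) + 2 ∧ 3 ∣ 2 * d * (P.natDegree + 1) + 2
          · rw [if_pos h3]; norm_num
          · rw [if_neg h3]; norm_num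
        · nlinarith
        · intro hdvd
          have h1 : d ∣ 2 * d * (P.natDegree + 1) := ⟨2 * (P.natDegree + 1), by ring⟩
          have h2' : d ∣ 2 := by
            have := Nat.dvd_sub hdvd h1
            simpa using this
          have := Nat.le_of_dvd (by norm_num) h2'
          omega
    have := congrArg (PowerSeries.coeff n) hF
    rw [map_add, PowerSeries.coeff_mk, Polynomial.coeff_coe,
      Polynomial.coeff_eq_zero_of_natDegree_lt hn2] at this
    unfold substPow at this
    rw [PowerSeries.coeff_mk, if_neg hdn, add_zero] at this
    exact hn1 this
end

section
/- Let A ⊆ ℂ be an integral domain that is finitely generated as a ℤ-algebra, and let s ∈ A be nonzero. Then there exist a finite field k and a ring homomorphism φ : A → k with φ(s) ≠ 0. -/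
instance : IsJacobsonRing ℤ := by
  rw [isJacobsonRing_iff_prime_eq]
  intro P hP
  by_cases hbot : P = ⊥
  · subst hbot
    refine le_antisymm (fun x hx => ?_) Ideal.le_jacobson
    obtain ⟨z, hz⟩ := Ideal.mem_jacobson_iff.1 hx x
    rw [Ideal.mem_bot] at hz ⊢
    have h2 : (x * x + 1) * z = 1 := by linear_combination hz
    have h3 : x * x + 1 = 1 := by
      rcases Int.isUnit_iff.1 (IsUnit.of_mul_eq_one _ h2) with h | h
      · exact h
      · nlinarith
    nlinarith
  · haveI := IsPrime.to_maximal_ideal hbot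
    exact Ideal.jacobson_eq_self_of_isMaximal

lemma field_finite_of_finiteType_int (K : Type) [Field K]
    [Algebra.FiniteType ℤ K] : Finite K := by
  have hfin : Module.Finite ℤ K := finite_of_finite_type_of_isJacobsonRing ℤ K
  have hint : Algebra.IsIntegral ℤ K := Algebra.IsIntegral.of_finite ℤ K
  obtain ⟨p, hp⟩ := CharP.exists K
  haveI := hp
  rcases CharP.char_is_prime_or_zero K p with hprime | h0
  · haveI : Fact p.Prime := ⟨hprime⟩
    haveI : Algebra (ZMod p) K := ZMod.algebra K p
    haveI : Module.Finite (ZMod p) K :=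
      Module.Finite.of_restrictScalars_finite ℤ (ZMod p) K
    exact Module.finite_of_finite (ZMod p)
  · subst h0
    haveI : CharZero K := CharP.charP_to_charZero K
    haveI : IsScalarTower ℤ ℚ K :=
      IsScalarTower.of_algebraMap_eq' (RingHom.ext_int _ _)
    have h2 : IsIntegral ℤ (algebraMap ℚ K (1/2)) := hint.isIntegral _
    have : IsIntegral ℤ ((1:ℚ)/2) :=
      IsIntegral.tower_bot (algebraMap ℚ K).injective h2
    obtain ⟨y, hy⟩ := IsIntegrallyClosed.isIntegral_iff.mp this
    have h4 : (y : ℚ) = 1/2 := by exact_mod_cast hy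
    have h5 : (2 : ℚ) * (y : ℚ) = 1 := by rw [h4]; norm_num
    have : (2 : ℤ) * y = 1 := by exact_mod_cast h5
    omega

lemma ft_transport {K : Type} [Ring K] (a1 a2 : Algebra ℤ K)
    (h : @Algebra.FiniteType ℤ K _ _ a1) : @Algebra.FiniteType ℤ K _ _ a2 := by
  rwa [Subsingleton.elim a2 a1]

lemma exists_hom_finite_field (B : Type) [CommRing B] [Nontrivial B]
    [hB : Algebra.FiniteType ℤ B] :
    ∃ (k : Type) (_ : Field k) (_ : Fintype k) (ψ : B →+* k), True := by
  obtain ⟨m, hm⟩ := Ideal.exists_maximal B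
  letI : Field (B ⧸ m) := Ideal.Quotient.field m
  haveI : Algebra.FiniteType ℤ (B ⧸ m) := by
    exact Algebra.FiniteType.of_surjective (Ideal.Quotient.mkₐ ℤ m)
      (Ideal.Quotient.mkₐ_surjective ℤ m)
  haveI : Finite (B ⧸ m) := @field_finite_of_finiteType_int (B ⧸ m) _ (ft_transport _ _ this)
  haveI : Fintype (B ⧸ m) := Fintype.ofFinite _
  exact ⟨B ⧸ m, inferInstance, inferInstance, Ideal.Quotient.mk m, trivial⟩

set_option maxHeartbeats 1000000 in
set_option synthInstance.maxHeartbeats 1000000 in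
/-- **Finite specialization.**  If `A ⊆ ℂ` is a subring that is finitely generated as
a `ℤ`-algebra and `s ∈ A` is nonzero, then there is a ring homomorphism from `A` to a
finite field sending `s` to a nonzero element. -/
theorem stmt_8 (A : Subring ℂ) (hA : Algebra.FiniteType ℤ A) (s : A) (hs : s ≠ 0) :
    ∃ (k : Type) (_ : Field k) (_ : Fintype k) (φ : A →+* k), φ s ≠ 0 := by
  let B := Localization.Away s
  have hinj : Function.Injective (algebraMap A B) :=
    IsLocalization.injective B (powers_le_nonZeroDivisors_of_noZeroDivisors hs)
  haveI : Nontrivial B := hinj.nontrivial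
  haveI : Algebra.FiniteType A B :=
    IsLocalization.finiteType_of_monoid_fg (Submonoid.powers s) B
  haveI hB : Algebra.FiniteType ℤ B := Algebra.FiniteType.trans hA ‹Algebra.FiniteType A B›
  haveI hB' : @Algebra.FiniteType ℤ B _ _ (Ring.toIntAlgebra B) := by exact ft_transport _ _ hB
  obtain ⟨k, fk, ftk, ψ, -⟩ := exists_hom_finite_field B (hB := hB')
  have hu : IsUnit (algebraMap A B s) :=
    IsLocalization.map_units B ⟨s, Submonoid.mem_powers s⟩
  exact ⟨k, fk, ftk, ψ.comp (algebraMap A B), fun h => (hu.map ψ).ne_zero h⟩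
end

section
/- Let γ = (γ_n)_{n≥1} be a periodic complex sequence (there exists T ≥ 1 with γ_{n+T} = γ_n for all n ≥ 1). If the Lambert series L_γ(z) := ∑_{n≥1} γ_n z^n/(1 − z^n) is a rational function, then γ is identically zero. -/
open Finset Polynomial

namespace Stmt16Aux


/-- periodicity extended to multiples of the period -/
lemma per_ext (γ : ℕ → ℂ) (T : ℕ) (hper : ∀ n : ℕ, 1 ≤ n → γ (n + T) = γ n)
    {n s : ℕ} (hn : 1 ≤ n) (hs : T ∣ s) : γ (n + s) = γ n := by
  obtain ⟨t, rfl⟩ := hs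
  induction t with
  | zero => simp
  | succ t ih =>
    have : n + T * (t + 1) = (n + T * t) + T := by ring
    rw [this, hper _ (le_trans hn (Nat.le_add_right _ _)), ih]

lemma gamma_p_mul (γ : ℕ → ℂ) (T : ℕ) (hT : 1 ≤ T)
    (hper : ∀ n : ℕ, 1 ≤ n → γ (n + T) = γ n)
    {p : ℕ} (hp1 : 1 ≤ p) (hmod : p ≡ 1 [MOD T]) {d : ℕ} (hd : 1 ≤ d) :
    γ (p * d) = γ d := by
  have hdvd : T ∣ p - 1 := (Nat.modEq_iff_dvd' hp1).1 hmod.symm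
  have : p * d = d + (p - 1) * d := by
    rcases Nat.exists_eq_add_of_le hp1 with ⟨q, rfl⟩
    simp [Nat.add_sub_cancel_left, add_mul, one_mul, add_comm]
  rw [this]
  exact per_ext γ T hper hd (Dvd.dvd.mul_right hdvd d)



lemma p_dvd_of_new {p m d : ℕ} (hp : p.Prime) (hd1 : d ∣ p * m) (hd2 : ¬ d ∣ m) :
    p ∣ d := by
  by_contra hpd
  have hcop : Nat.Coprime d p := (hp.coprime_iff_not_dvd.mpr hpd).symm
  rw [mul_comm] at hd1
  exact hd2 (hcop.dvd_of_dvd_mul_right hd1)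

lemma FE (γ : ℕ → ℂ) {p : ℕ} (hp : p.Prime)
    (hγp : ∀ d : ℕ, 1 ≤ d → γ (p * d) = γ d) (m : ℕ) :
    (∑ d ∈ (p * m).divisors, γ d) =
      2 * (∑ d ∈ m.divisors, γ d) -
        (if p ∣ m then ∑ d ∈ (m / p).divisors, γ d else 0) := by
  rcases Nat.eq_zero_or_pos m with rfl | hm
  · simp
  have hm0 : m ≠ 0 := hm.ne'
  have hp0 : 0 < p := hp.pos
  have hpm0 : p * m ≠ 0 := by positivity
  have hsub : m.divisors ⊆ (p * m).divisors := by
    intro d hd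
    rw [Nat.mem_divisors] at hd ⊢
    exact ⟨hd.1.mul_left p, hpm0⟩
  have hsdiff := Finset.sum_sdiff (f := γ) hsub
  have hmem : ∀ d ∈ (p * m).divisors \ m.divisors, d ∣ p * m ∧ ¬ d ∣ m := by
    intro d hd
    rw [Finset.mem_sdiff, Nat.mem_divisors, Nat.mem_divisors] at hd
    push_neg at hd
    exact ⟨hd.1.1, fun h => hm0 (hd.2 h)⟩
  have hA : (∑ d ∈ (p * m).divisors \ m.divisors, γ d) =
      ∑ e ∈ m.divisors.filter (fun e => ¬ p * e ∣ m), γ e := by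
    apply Finset.sum_nbij' (fun d => d / p) (fun e => p * e)
    · intro d hd
      obtain ⟨hd1, hd2⟩ := hmem d hd
      obtain ⟨e, rfl⟩ := p_dvd_of_new hp hd1 hd2
      rw [Nat.mul_div_cancel_left _ hp0]
      have he : e ∣ m := (mul_dvd_mul_iff_left hp0.ne').mp hd1
      rw [Finset.mem_filter, Nat.mem_divisors]
      exact ⟨⟨he, hm0⟩, hd2⟩
    · intro e he
      rw [Finset.mem_filter, Nat.mem_divisors] at he
      obtain ⟨⟨he1, -⟩, he2⟩ := he
      rw [Finset.mem_sdiff, Nat.mem_divisors, Nat.mem_divisors]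
      push_neg
      exact ⟨⟨mul_dvd_mul_left p he1, hpm0⟩, fun h => absurd h he2⟩
    · intro d hd
      obtain ⟨hd1, hd2⟩ := hmem d hd
      exact Nat.mul_div_cancel' (p_dvd_of_new hp hd1 hd2)
    · intro e _
      exact Nat.mul_div_cancel_left _ hp0
    · intro d hd
      obtain ⟨hd1, hd2⟩ := hmem d hd
      obtain ⟨e, rfl⟩ := p_dvd_of_new hp hd1 hd2
      rw [Nat.mul_div_cancel_left _ hp0]
      have he : e ∣ m := (mul_dvd_mul_iff_left hp0.ne').mp hd1
      have he1 : 1 ≤ e := Nat.pos_of_dvd_of_pos he hm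
      exact hγp e he1
  have hC : (∑ e ∈ m.divisors.filter (fun e => p * e ∣ m), γ e) =
      (if p ∣ m then ∑ d ∈ (m / p).divisors, γ d else 0) := by
    split_ifs with hpm
    · apply Finset.sum_congr _ (fun _ _ => rfl)
      ext e
      rw [Finset.mem_filter, Nat.mem_divisors, Nat.mem_divisors]
      have hmp0 : m / p ≠ 0 := (Nat.div_pos (Nat.le_of_dvd hm hpm) hp0).ne'
      constructor
      · rintro ⟨⟨-, -⟩, hpe⟩
        exact ⟨(Nat.dvd_div_iff_mul_dvd hpm).mpr hpe, hmp0⟩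
      · rintro ⟨he, -⟩
        have hpe : p * e ∣ m := (Nat.dvd_div_iff_mul_dvd hpm).mp he
        exact ⟨⟨dvd_trans (Dvd.intro_left p rfl) hpe, hm0⟩, hpe⟩
    · rw [Finset.filter_false_of_mem, Finset.sum_empty]
      intro e _ hpe
      exact hpm (dvd_trans (Dvd.intro e rfl) hpe)
  have hB := Finset.sum_filter_add_sum_filter_not m.divisors (fun e => p * e ∣ m) γ
  rw [← hsdiff, hA]
  have hkey : (∑ e ∈ m.divisors.filter (fun e => ¬ p * e ∣ m), γ e)
      = (∑ d ∈ m.divisors, γ d) - (if p ∣ m then ∑ d ∈ (m / p).divisors, γ d else 0) := by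
    rw [← hC]; linear_combination hB
  rw [hkey]; ring



noncomputable def Up (p : ℕ) (G : PowerSeries ℂ) : PowerSeries ℂ :=
  PowerSeries.mk fun m => PowerSeries.coeff (p * m) G

noncomputable def Ep (p : ℕ) (G : PowerSeries ℂ) : PowerSeries ℂ :=
  PowerSeries.mk fun m => if p ∣ m then PowerSeries.coeff (m / p) G else 0

@[simp] lemma coeff_Up (p : ℕ) (G : PowerSeries ℂ) (m : ℕ) :
    PowerSeries.coeff m (Up p G) = PowerSeries.coeff (p * m) G :=
  PowerSeries.coeff_mk _ _

@[simp] lemma coeff_Ep (p : ℕ) (G : PowerSeries ℂ) (m : ℕ) :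
    PowerSeries.coeff m (Ep p G)
      = if p ∣ m then PowerSeries.coeff (m / p) G else 0 :=
  PowerSeries.coeff_mk _ _

/-- reindexing of the antidiagonal along multiplication by `p` -/
lemma L1 (f : ℕ → ℕ → ℂ) {p : ℕ} (hp : 0 < p) (m : ℕ) :
    (∑ x ∈ Finset.HasAntidiagonal.antidiagonal (p * m), if p ∣ x.1 then f (x.1 / p) x.2 else 0)
      = ∑ y ∈ Finset.HasAntidiagonal.antidiagonal m, f y.1 (p * y.2) := by
  rw [← Finset.sum_filter]
  apply Finset.sum_nbij' (fun x => (x.1 / p, x.2 / p)) (fun y => (p * y.1, p * y.2))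
  · intro x hx
    rw [Finset.mem_filter, Finset.HasAntidiagonal.mem_antidiagonal] at hx
    obtain ⟨hsum, hx1⟩ := hx
    have hx2 : p ∣ x.2 := by
      have : p ∣ x.1 + x.2 := hsum ▸ dvd_mul_right p m
      exact (Nat.dvd_add_right hx1).mp this
    obtain ⟨i, hi⟩ := hx1
    obtain ⟨j, hj⟩ := hx2
    rw [Finset.HasAntidiagonal.mem_antidiagonal]
    rw [hi, hj] at hsum ⊢
    rw [Nat.mul_div_cancel_left _ hp, Nat.mul_div_cancel_left _ hp]
    exact Nat.eq_of_mul_eq_mul_left hp (by linarith [hsum])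
  · intro y hy
    rw [Finset.HasAntidiagonal.mem_antidiagonal] at hy
    rw [Finset.mem_filter, Finset.HasAntidiagonal.mem_antidiagonal]
    exact ⟨by rw [← Nat.mul_add, hy], dvd_mul_right _ _⟩
  · intro x hx
    rw [Finset.mem_filter, Finset.HasAntidiagonal.mem_antidiagonal] at hx
    obtain ⟨hsum, hx1⟩ := hx
    have hx2 : p ∣ x.2 := by
      have : p ∣ x.1 + x.2 := hsum ▸ dvd_mul_right p m
      exact (Nat.dvd_add_right hx1).mp this
    ext <;> simp [Nat.mul_div_cancel' hx1, Nat.mul_div_cancel' hx2]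
  · intro y _
    ext <;> simp [Nat.mul_div_cancel_left _ hp]
  · intro x hx
    rw [Finset.mem_filter, Finset.HasAntidiagonal.mem_antidiagonal] at hx
    obtain ⟨hsum, hx1⟩ := hx
    have hx2 : p ∣ x.2 := by
      have : p ∣ x.1 + x.2 := hsum ▸ dvd_mul_right p m
      exact (Nat.dvd_add_right hx1).mp this
    rw [Nat.mul_div_cancel' hx2]

/-- `U_p((expand p R) · G) = R · U_p G` -/
lemma Up_expand_mul {p : ℕ} (hp : 0 < p) (R : Polynomial ℂ) (G : PowerSeries ℂ) :
    Up p (((Polynomial.expand ℂ p R : Polynomial ℂ) : PowerSeries ℂ) * G)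
      = (R : PowerSeries ℂ) * Up p G := by
  ext m
  rw [coeff_Up, PowerSeries.coeff_mul, PowerSeries.coeff_mul]
  calc (∑ x ∈ Finset.HasAntidiagonal.antidiagonal (p * m),
          PowerSeries.coeff x.1 ((Polynomial.expand ℂ p R : Polynomial ℂ) : PowerSeries ℂ)
            * PowerSeries.coeff x.2 G)
      = ∑ x ∈ Finset.HasAntidiagonal.antidiagonal (p * m),
          (if p ∣ x.1 then R.coeff (x.1 / p) * PowerSeries.coeff x.2 G else 0) := by
        apply Finset.sum_congr rfl
        intro x _
        rw [Polynomial.coeff_coe, Polynomial.coeff_expand hp, ite_mul, zero_mul]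
    _ = ∑ y ∈ Finset.HasAntidiagonal.antidiagonal m, R.coeff y.1 * PowerSeries.coeff (p * y.2) G :=
        L1 (fun i j => R.coeff i * PowerSeries.coeff j G) hp m
    _ = ∑ y ∈ Finset.HasAntidiagonal.antidiagonal m,
          PowerSeries.coeff y.1 (R : PowerSeries ℂ) * PowerSeries.coeff y.2 (Up p G) := by
        apply Finset.sum_congr rfl
        intro y _
        rw [Polynomial.coeff_coe, coeff_Up]

/-- `E_p` is multiplicative -/
lemma Ep_mul {p : ℕ} (hp : 0 < p) (G H : PowerSeries ℂ) :
    Ep p (G * H) = Ep p G * Ep p H := by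
  ext m
  rw [PowerSeries.coeff_mul, coeff_Ep]
  by_cases hpm : p ∣ m
  · obtain ⟨m', rfl⟩ := hpm
    rw [if_pos (dvd_mul_right p m'), Nat.mul_div_cancel_left _ hp]
    symm
    calc (∑ x ∈ Finset.HasAntidiagonal.antidiagonal (p * m'),
            PowerSeries.coeff x.1 (Ep p G) * PowerSeries.coeff x.2 (Ep p H))
        = ∑ x ∈ Finset.HasAntidiagonal.antidiagonal (p * m'),
            (if p ∣ x.1 then
              PowerSeries.coeff (x.1 / p) G *
                (if p ∣ x.2 then PowerSeries.coeff (x.2 / p) H else 0) else 0) := by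
          apply Finset.sum_congr rfl
          intro x _
          rw [coeff_Ep, coeff_Ep, ite_mul, zero_mul]
      _ = ∑ y ∈ Finset.HasAntidiagonal.antidiagonal m',
            PowerSeries.coeff y.1 G *
              (if p ∣ p * y.2 then PowerSeries.coeff ((p * y.2) / p) H else 0) :=
          L1 (fun i j => PowerSeries.coeff i G *
            (if p ∣ j then PowerSeries.coeff (j / p) H else 0)) hp m'
      _ = ∑ y ∈ Finset.HasAntidiagonal.antidiagonal m',
            PowerSeries.coeff y.1 G * PowerSeries.coeff y.2 H := by
          apply Finset.sum_congr rfl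
          intro y _
          rw [if_pos (dvd_mul_right p y.2), Nat.mul_div_cancel_left _ hp]
      _ = PowerSeries.coeff m' (G * H) := (PowerSeries.coeff_mul _ _ _).symm
  · rw [if_neg hpm]
    symm
    apply Finset.sum_eq_zero
    intro x hx
    rw [Finset.HasAntidiagonal.mem_antidiagonal] at hx
    rw [coeff_Ep, coeff_Ep]
    by_cases h1 : p ∣ x.1
    · by_cases h2 : p ∣ x.2
      · exact absurd (hx ▸ dvd_add h1 h2) hpm
      · rw [if_neg h2, mul_zero]
    · rw [if_neg h1, zero_mul]

/-- coercion of `expand` is `E_p` of the coercion -/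
lemma coe_expand {p : ℕ} (hp : 0 < p) (A : Polynomial ℂ) :
    ((Polynomial.expand ℂ p A : Polynomial ℂ) : PowerSeries ℂ) = Ep p (A : PowerSeries ℂ) := by
  ext m
  rw [Polynomial.coeff_coe, Polynomial.coeff_expand hp, coeff_Ep]
  split_ifs <;> simp [Polynomial.coeff_coe]

/-- coercion of `contract` is `U_p` of the coercion -/
lemma coe_contract {p : ℕ} (hp : 0 < p) (A : Polynomial ℂ) :
    ((Polynomial.contract p A : Polynomial ℂ) : PowerSeries ℂ) = Up p (A : PowerSeries ℂ) := by
  ext m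
  rw [Polynomial.coeff_coe, Polynomial.coeff_contract hp.ne', coeff_Up,
    Polynomial.coeff_coe, mul_comm]

/-- expand-contract for polynomials whose coefficients vanish off multiples of p -/
lemma expand_contract' {p : ℕ} (hp : 0 < p) (A : Polynomial ℂ)
    (h : ∀ i, ¬ p ∣ i → A.coeff i = 0) :
    Polynomial.expand ℂ p (Polynomial.contract p A) = A := by
  ext i
  rw [Polynomial.coeff_expand hp]
  split_ifs with hd
  · rw [Polynomial.coeff_contract hp.ne', Nat.div_mul_cancel hd]
  · exact (h i hd).symm



lemma coeff_comp_C_mul_X (A : Polynomial ℂ) (c : ℂ) (n : ℕ) :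
    (A.comp (C c * X)).coeff n = c ^ n * A.coeff n := by
  induction A using Polynomial.induction_on' with
  | add p q hp hq => simp [add_comp, hp, hq, mul_add]
  | monomial k a =>
    rw [monomial_comp, mul_pow, ← C_pow, ← mul_assoc, ← C_mul, Polynomial.coeff_C_mul,
      coeff_X_pow, coeff_monomial]
    by_cases h : k = n
    · subst h; simp [mul_comm]
    · simp [h, if_neg (Ne.symm h)]

/-- shift symmetry of the symmetrized product -/
lemma Qstar_comp {p : ℕ} (hp : 0 < p) {ζ : ℂ} (hζ : IsPrimitiveRoot ζ p) (Q : Polynomial ℂ) :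
    (∏ j ∈ Finset.range p, Q.comp (C (ζ ^ j) * X)).comp (C ζ * X)
      = ∏ j ∈ Finset.range p, Q.comp (C (ζ ^ j) * X) := by
  set u : ℕ → Polynomial ℂ := fun j => Q.comp (C (ζ ^ j) * X) with hu
  have hcomp : ∀ j, (u j).comp (C ζ * X) = u (j + 1) := by
    intro j
    rw [hu]
    simp only
    rw [comp_assoc]
    congr 1
    rw [mul_comp, C_comp, X_comp, ← mul_assoc, ← C_mul, pow_succ]
  rw [Polynomial.prod_comp]
  rw [Finset.prod_congr rfl (fun j _ => hcomp j)]
  obtain ⟨p0, rfl⟩ : ∃ p0, p = p0 + 1 := ⟨p - 1, (Nat.succ_pred_eq_of_pos hp).symm⟩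
  rw [Finset.prod_range_succ, Finset.prod_range_succ']
  have hu0 : u (p0 + 1) = u 0 := by
    rw [hu]; simp only
    rw [hζ.pow_eq_one, pow_zero]
  rw [hu0, mul_comm]

lemma coeff_eq_zero_of_not_dvd {p : ℕ} (hp : 0 < p) {ζ : ℂ} (hζ : IsPrimitiveRoot ζ p)
    (Q : Polynomial ℂ) {i : ℕ} (hi : ¬ p ∣ i) :
    (∏ j ∈ Finset.range p, Q.comp (C (ζ ^ j) * X)).coeff i = 0 := by
  have h := Qstar_comp hp hζ Q
  have h2 := congrArg (fun A => Polynomial.coeff A i) h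
  rw [coeff_comp_C_mul_X] at h2
  have hζi : ζ ^ i ≠ 1 := fun hh => hi (hζ.pow_eq_one_iff_dvd i |>.mp hh)
  have : (ζ ^ i - 1) * (∏ j ∈ Finset.range p, Q.comp (C (ζ ^ j) * X)).coeff i = 0 := by
    rw [sub_mul, one_mul, h2, sub_self]
  rcases mul_eq_zero.mp this with h3 | h3
  · exact absurd (by linear_combination h3) hζi
  · exact h3


end Stmt16Aux

/-- The Lambert series `L_γ(z) = ∑_{n ≥ 1} γ_n z^n / (1 - z^n)`, given by its
coefficients: the `m`-th coefficient is the divisor sum `∑_{d ∣ m} γ d`. -/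
noncomputable def LambertSeries (γ : ℕ → ℂ) : PowerSeries ℂ :=
  PowerSeries.mk fun m => ∑ d ∈ m.divisors, γ d

open Stmt16Aux Polynomial in
/-- If `γ` is periodic and its Lambert series is rational, then `γ` is identically
zero. -/
theorem stmt_16 (γ : ℕ → ℂ) (T : ℕ) (hT : 1 ≤ T)
    (hper : ∀ n : ℕ, 1 ≤ n → γ (n + T) = γ n)
    (hL : IsRationalPS (LambertSeries γ)) :
    ∀ n : ℕ, 1 ≤ n → γ n = 0 := by
  have hT0 : T ≠ 0 := by omega
  set F : PowerSeries ℂ := LambertSeries γ with hF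
  have hcoeffF : ∀ m, PowerSeries.coeff m F = ∑ d ∈ m.divisors, γ d := by
    intro m; rw [hF, LambertSeries, PowerSeries.coeff_mk]
  obtain ⟨P, Q, hQ0, hQF⟩ := hL
  -- reduce the fraction
  have hQne : Q ≠ 0 := fun h => hQ0 (by simp [h])
  set g : Polynomial ℂ := GCDMonoid.gcd P Q with hg
  have hgne : g ≠ 0 := gcd_ne_zero_of_right hQne
  set P₁ : Polynomial ℂ := P / g with hP₁def
  set Q₁ : Polynomial ℂ := Q / g with hQ₁def
  have hP : g * P₁ = P := EuclideanDomain.mul_div_cancel' hgne (gcd_dvd_left P Q)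
  have hQ : g * Q₁ = Q := EuclideanDomain.mul_div_cancel' hgne (gcd_dvd_right P Q)
  have hco : IsCoprime P₁ Q₁ := isCoprime_div_gcd_div_gcd hQne
  have hQ₁0 : Q₁.coeff 0 ≠ 0 := by
    intro h
    apply hQ0
    rw [← hQ, Polynomial.mul_coeff_zero, h, mul_zero]
  have hQ₁ne : Q₁ ≠ 0 := fun h => hQ₁0 (by simp [h])
  have hQ₁F : (Q₁ : PowerSeries ℂ) * F = (P₁ : PowerSeries ℂ) := by
    have hgc : ((g : Polynomial ℂ) : PowerSeries ℂ) ≠ 0 := by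
      rw [Ne, Polynomial.coe_eq_zero_iff]; exact hgne
    apply mul_left_cancel₀ hgc
    rw [← mul_assoc, ← Polynomial.coe_mul, hQ, hQF, ← Polynomial.coe_mul, hP]
  -- choose the prime p
  obtain ⟨p, hpp, hpgt, hpmod⟩ := Nat.exists_prime_gt_modEq_one (2 * Q₁.natDegree) hT0
  have hp0 : 0 < p := hpp.pos
  have hγp : ∀ d : ℕ, 1 ≤ d → γ (p * d) = γ d :=
    fun d hd => gamma_p_mul γ T hT hper hpp.one_lt.le hpmod hd
  -- the functional equation, in power series form
  have hUpF : Up p F = PowerSeries.C 2 * F - Ep p F := by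
    ext m
    rw [coeff_Up, map_sub, PowerSeries.coeff_C_mul, coeff_Ep, hcoeffF, hcoeffF]
    have := FE γ hpp hγp m
    rw [this]
    congr 1
    split_ifs with h
    · rw [hcoeffF]
    · rfl
  -- the symmetrized denominator
  set ζ : ℂ := Complex.exp (2 * Real.pi * Complex.I / p) with hζdef
  have hζ : IsPrimitiveRoot ζ p := Complex.isPrimitiveRoot_exp p hpp.ne_zero
  set Qstar : Polynomial ℂ := ∏ j ∈ Finset.range p, Q₁.comp (C (ζ ^ j) * X) with hQstardef
  set R : Polynomial ℂ := Polynomial.contract p Qstar with hRdef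
  have hexp : Polynomial.expand ℂ p R = Qstar :=
    expand_contract' hp0 Qstar (fun i hi => coeff_eq_zero_of_not_dvd hp0 hζ Q₁ hi)
  have hQdvd : Q₁ ∣ Qstar := by
    have h := Finset.dvd_prod_of_mem (fun j => Q₁.comp (C (ζ ^ j) * X))
      (Finset.mem_range.mpr hp0)
    rwa [pow_zero, Polynomial.C_1, one_mul, Polynomial.comp_X] at h
  obtain ⟨Qc, hQc⟩ := hQdvd
  set Pstar : Polynomial ℂ := Qc * P₁ with hPstardef
  have hQstarF : (Qstar : PowerSeries ℂ) * F = (Pstar : PowerSeries ℂ) := by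
    rw [hQc, Polynomial.coe_mul, hPstardef, Polynomial.coe_mul, mul_comm (Q₁ : PowerSeries ℂ),
      mul_assoc, hQ₁F]
  set S : Polynomial ℂ := Polynomial.contract p Pstar with hSdef
  have hS : ((S : Polynomial ℂ) : PowerSeries ℂ) = Up p (Pstar : PowerSeries ℂ) :=
    coe_contract hp0 Pstar
  have hRUp : (R : PowerSeries ℂ) * Up p F = (S : PowerSeries ℂ) := by
    calc (R : PowerSeries ℂ) * Up p F
        = Up p (((Polynomial.expand ℂ p R : Polynomial ℂ) : PowerSeries ℂ) * F) :=
          (Up_expand_mul hp0 R F).symm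
      _ = Up p ((Qstar : PowerSeries ℂ) * F) := by rw [hexp]
      _ = Up p (Pstar : PowerSeries ℂ) := by rw [hQstarF]
      _ = (S : PowerSeries ℂ) := hS.symm
  have hδ : ((Polynomial.expand ℂ p Q₁ : Polynomial ℂ) : PowerSeries ℂ) * Ep p F
      = ((Polynomial.expand ℂ p P₁ : Polynomial ℂ) : PowerSeries ℂ) := by
    rw [coe_expand hp0, coe_expand hp0, ← Ep_mul hp0, hQ₁F]
  -- the key polynomial identity
  set N : Polynomial ℂ := C 2 * P₁ * R - Q₁ * S with hNdef
  have hser : ((Polynomial.expand ℂ p Q₁ * N : Polynomial ℂ) : PowerSeries ℂ)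
      = ((Q₁ * R * Polynomial.expand ℂ p P₁ : Polynomial ℂ) : PowerSeries ℂ) := by
    rw [Polynomial.coe_mul, Polynomial.coe_mul, Polynomial.coe_mul]
    have hNc : ((N : Polynomial ℂ) : PowerSeries ℂ)
        = PowerSeries.C 2 * (P₁ : PowerSeries ℂ) * (R : PowerSeries ℂ)
          - (Q₁ : PowerSeries ℂ) * (S : PowerSeries ℂ) := by
      rw [hNdef, Polynomial.coe_sub, Polynomial.coe_mul, Polynomial.coe_mul,
        Polynomial.coe_mul, Polynomial.coe_C]
    have h1 : (PowerSeries.C 2 * (P₁ : PowerSeries ℂ) * (R : PowerSeries ℂ)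
        - (Q₁ : PowerSeries ℂ) * (S : PowerSeries ℂ))
        = (Q₁ : PowerSeries ℂ) * (R : PowerSeries ℂ) * Ep p F := by
      rw [← hRUp, ← hQ₁F, hUpF]; ring
    rw [hNc, h1, ← hδ]; ring
  have hpoly : Polynomial.expand ℂ p Q₁ * N = Q₁ * R * Polynomial.expand ℂ p P₁ :=
    Polynomial.coe_inj.mp hser
  -- degree argument : Q₁ must be constant
  have hQstar0 : Qstar.eval 0 ≠ 0 := by
    rw [hQstardef, Polynomial.eval_prod]
    apply Finset.prod_ne_zero_iff.mpr
    intro j _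
    rw [Polynomial.eval_comp, Polynomial.eval_mul, Polynomial.eval_X, mul_zero,
      ← Polynomial.coeff_zero_eq_eval_zero]
    exact hQ₁0
  have hQstarne : Qstar ≠ 0 := fun h => hQstar0 (by rw [h, Polynomial.eval_zero])
  have hRne : R ≠ 0 := by
    intro h
    apply hQstarne
    rw [← hexp, h, map_zero]
  have hζne : ζ ≠ 0 := hζ.ne_zero hpp.ne_zero
  have hdegu : ∀ j, (Q₁.comp (C (ζ ^ j) * X)).natDegree = Q₁.natDegree := by
    intro j
    rw [Polynomial.natDegree_comp, Polynomial.natDegree_C_mul_X _ (pow_ne_zero j hζne), mul_one]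
  have hune : ∀ j ∈ Finset.range p, Q₁.comp (C (ζ ^ j) * X) ≠ 0 := by
    intro j _ h
    apply hQ₁0
    have := congrArg (Polynomial.eval 0) h
    rw [Polynomial.eval_comp, Polynomial.eval_mul, Polynomial.eval_X, mul_zero,
      ← Polynomial.coeff_zero_eq_eval_zero, Polynomial.eval_zero] at this
    exact this
  have hdegQstar : Qstar.natDegree = p * Q₁.natDegree := by
    rw [hQstardef, Polynomial.natDegree_prod _ _ hune]
    rw [Finset.sum_congr rfl (fun j _ => hdegu j), Finset.sum_const, Finset.card_range,
      smul_eq_mul]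
  have hdegR : R.natDegree = Q₁.natDegree := by
    have h1 : R.natDegree * p = Qstar.natDegree := by
      rw [← Polynomial.natDegree_expand, hexp]
    rw [hdegQstar, mul_comm p _] at h1
    exact Nat.eq_of_mul_eq_mul_right hp0 h1
  have hQdeg : Q₁.natDegree = 0 := by
    by_contra hnd
    have hdegpos : 0 < Q₁.degree := Polynomial.natDegree_pos_iff_degree_pos.mp (Nat.pos_of_ne_zero hnd)
    obtain ⟨β, hβ⟩ := Complex.exists_root hdegpos
    have hβ0 : β ≠ 0 := by
      intro h
      apply hQ₁0
      rw [Polynomial.coeff_zero_eq_eval_zero]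
      rw [h] at hβ
      exact hβ
    obtain ⟨w₀, hw₀⟩ := IsAlgClosed.exists_pow_nat_eq β hp0
    have hw₀0 : w₀ ≠ 0 := by
      intro h
      apply hβ0
      rw [← hw₀, h, zero_pow hpp.ne_zero]
    have hP₁β : P₁.eval β ≠ 0 := by
      obtain ⟨A, B, hAB⟩ := hco
      intro h
      have := congrArg (Polynomial.eval β) hAB
      rw [Polynomial.eval_add, Polynomial.eval_mul, Polynomial.eval_mul, h, mul_zero,
        hβ.eq_zero, mul_zero, add_zero, Polynomial.eval_one] at this
      exact one_ne_zero this.symm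
    -- the p distinct p-th roots of β are all roots of Q₁ * R
    have hwroot : ∀ j, ((Q₁ * R).eval (w₀ * ζ ^ j)) = 0 := by
      intro j
      have hwp : (w₀ * ζ ^ j) ^ p = β := by
        rw [mul_pow, ← pow_mul, mul_comm j p, pow_mul, hζ.pow_eq_one, one_pow, mul_one, hw₀]
      have hev := congrArg (Polynomial.eval (w₀ * ζ ^ j)) hpoly
      rw [Polynomial.eval_mul, Polynomial.eval_mul, Polynomial.eval_mul,
        Polynomial.expand_eval, Polynomial.expand_eval, hwp] at hev
      have hQβ : Q₁.eval β = 0 := hβ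
      rw [hQβ, zero_mul] at hev
      have : Q₁.eval (w₀ * ζ ^ j) * R.eval (w₀ * ζ ^ j) = 0 := by
        rcases mul_eq_zero.mp hev.symm with h | h
        · exact h
        · exact absurd h hP₁β
      rw [Polynomial.eval_mul]
      exact this
    have hQRne : Q₁ * R ≠ 0 := mul_ne_zero hQ₁ne hRne
    set W : Finset ℂ := (Finset.range p).image (fun j => w₀ * ζ ^ j) with hW
    have hinj : Set.InjOn (fun j => w₀ * ζ ^ j) (Finset.range p) := by
      intro i hi j hj hij
      simp only at hij
      have : ζ ^ i = ζ ^ j := mul_left_cancel₀ hw₀0 hij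
      exact hζ.pow_inj (Finset.mem_range.mp hi) (Finset.mem_range.mp hj) this
    have hcard : W.card = p := by
      rw [hW, Finset.card_image_of_injOn hinj, Finset.card_range]
    have hsub : W ⊆ (Q₁ * R).roots.toFinset := by
      intro w hw
      rw [hW, Finset.mem_image] at hw
      obtain ⟨j, _, rfl⟩ := hw
      rw [Multiset.mem_toFinset, Polynomial.mem_roots hQRne]
      exact hwroot j
    have : p ≤ 2 * Q₁.natDegree := by
      calc p = W.card := hcard.symm
        _ ≤ (Q₁ * R).roots.toFinset.card := Finset.card_le_card hsub
        _ ≤ Multiset.card (Q₁ * R).roots := Multiset.toFinset_card_le _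
        _ ≤ (Q₁ * R).natDegree := Polynomial.card_roots' _
        _ = Q₁.natDegree + R.natDegree := Polynomial.natDegree_mul hQ₁ne hRne
        _ = 2 * Q₁.natDegree := by rw [hdegR]; ring
    omega
  -- hence F is a polynomial : divisor sums vanish eventually
  have hvan : ∀ m, P₁.natDegree < m → (∑ d ∈ m.divisors, γ d) = 0 := by
    intro m hm
    have hc := congrArg (PowerSeries.coeff m) hQ₁F
    rw [Polynomial.eq_C_of_natDegree_eq_zero hQdeg, Polynomial.coe_C,
      PowerSeries.coeff_C_mul, Polynomial.coeff_coe,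
      Polynomial.coeff_eq_zero_of_natDegree_lt hm, hcoeffF] at hc
    have hc0 : Q₁.coeff 0 ≠ 0 := hQ₁0
    exact (mul_eq_zero.mp hc).resolve_left hc0
  -- all divisor sums vanish
  have hA0 : ∀ n : ℕ, 1 ≤ n → (∑ d ∈ n.divisors, γ d) = 0 := by
    intro n hn
    obtain ⟨q, hqp, hqgt, hqmod⟩ := Nat.exists_prime_gt_modEq_one (max n P₁.natDegree) hT0
    have hγq : ∀ d : ℕ, 1 ≤ d → γ (q * d) = γ d :=
      fun d hd => gamma_p_mul γ T hT hper hqp.one_lt.le hqmod hd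
    have hq_n : ¬ q ∣ n := by
      intro hdvd
      have h1 := Nat.le_of_dvd hn hdvd
      have h2 : n < q := lt_of_le_of_lt (le_max_left n P₁.natDegree) hqgt
      omega
    have h1 : (∑ d ∈ (q * n).divisors, γ d) = 0 := by
      apply hvan
      calc P₁.natDegree < q := lt_of_le_of_lt (le_max_right n P₁.natDegree) hqgt
        _ = q * 1 := (mul_one q).symm
        _ ≤ q * n := Nat.mul_le_mul_left q hn
    have h2 := FE γ hqp hγq n
    rw [h1, if_neg hq_n] at h2
    have h3 : (2 : ℂ) * (∑ d ∈ n.divisors, γ d) = 0 := by linear_combination -h2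
    exact (mul_eq_zero.mp h3).resolve_left two_ne_zero
  -- conclude γ = 0 by strong induction
  intro n
  induction n using Nat.strong_induction_on with
  | _ n ih =>
    intro hn
    have hmem : n ∈ n.divisors := Nat.mem_divisors_self n (by omega)
    have hsum := hA0 n hn
    rw [← Finset.add_sum_erase _ γ hmem] at hsum
    have hrest : (∑ d ∈ n.divisors.erase n, γ d) = 0 := by
      apply Finset.sum_eq_zero
      intro d hd
      rw [Finset.mem_erase, Nat.mem_divisors] at hd
      have hdn : d < n := lt_of_le_of_ne (Nat.le_of_dvd hn hd.2.1) hd.1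
      have hd1 : 1 ≤ d := Nat.pos_of_dvd_of_pos hd.2.1 hn
      exact ih d hdn hd1
    rw [hrest, add_zero] at hsum
    exact hsum
end

section
/- Let (F_n)_{n≥1} be the Fibonacci sequence (F_1 = F_2 = 1, F_{n+2} = F_{n+1} + F_n). Then the Lambert series ∑_{n≥1} F_n z^n/(1 − z^n) is not a rational function. -/
namespace Stmt17Aux

open Filter Finset Polynomial
open Real (goldenRatio goldenConj)

/-! ### Arithmetic auxiliary definitions -/

/-- `∑_{t ∣ m} fib (m / t)`, i.e. the divisor sum of Fibonacci numbers. -/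
def Afib (m : ℕ) : ℕ := ∑ t ∈ m.divisors, Nat.fib (m / t)

/-- Truncated version: only divisors `t > e` are kept. -/
def Ce (e m : ℕ) : ℕ :=
  ∑ t ∈ m.divisors.filter (fun t => e < t), Nat.fib (m / t)

lemma Ce_zero (m : ℕ) : Ce 0 m = Afib m := by
  unfold Ce Afib
  rw [Finset.filter_true_of_mem fun t ht => Nat.pos_of_mem_divisors ht]

lemma Ce_succ (e m : ℕ) (hm : m ≠ 0) :
    Ce e m = Ce (e+1) m + if (e+1) ∣ m then Nat.fib (m / (e+1)) else 0 := by
  unfold Ce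
  have hsplit : m.divisors.filter (fun t => e < t)
      = (m.divisors.filter (fun t => e + 1 < t)) ∪ (m.divisors.filter (fun t => t = e + 1)) := by
    ext t
    simp only [Finset.mem_union, Finset.mem_filter]
    constructor
    · rintro ⟨ht, h⟩
      rcases Nat.lt_or_ge (e+1) t with h' | h'
      · exact Or.inl ⟨ht, h'⟩
      · exact Or.inr ⟨ht, by omega⟩
    · rintro (⟨ht, h⟩ | ⟨ht, h⟩) <;> exact ⟨ht, by omega⟩
  have hdisj : Disjoint (m.divisors.filter (fun t => e + 1 < t))
      (m.divisors.filter (fun t => t = e + 1)) := by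
    refine Finset.disjoint_left.mpr ?_
    intro t ht1 ht2
    simp only [Finset.mem_filter] at ht1 ht2
    omega
  rw [hsplit, Finset.sum_union hdisj]
  congr 1
  rw [Finset.filter_eq']
  by_cases h : e + 1 ∈ m.divisors
  · rw [if_pos h, Finset.sum_singleton, if_pos (Nat.mem_divisors.mp h).1]
  · rw [if_neg h, Finset.sum_empty, if_neg fun hd => h (Nat.mem_divisors.mpr ⟨hd, hm⟩)]

lemma Ce_le (e m : ℕ) : Ce e m ≤ m * Nat.fib (m / (e+1)) := by
  unfold Ce
  have hsub : m.divisors.filter (fun t => e < t) ⊆ Finset.Icc 1 m := by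
    intro t ht
    simp only [Finset.mem_filter] at ht
    exact Finset.mem_Icc.mpr ⟨Nat.pos_of_mem_divisors ht.1, Nat.divisor_le ht.1⟩
  calc ∑ t ∈ m.divisors.filter (fun t => e < t), Nat.fib (m / t)
      ≤ ∑ _t ∈ m.divisors.filter (fun t => e < t), Nat.fib (m / (e+1)) := by
        refine Finset.sum_le_sum fun t ht => ?_
        simp only [Finset.mem_filter] at ht
        exact Nat.fib_mono (Nat.div_le_div_left ht.2 (Nat.succ_pos e))
    _ = (m.divisors.filter (fun t => e < t)).card * Nat.fib (m / (e+1)) := by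
        rw [Finset.sum_const, smul_eq_mul]
    _ ≤ m * Nat.fib (m / (e+1)) := by
        refine Nat.mul_le_mul_right _ ?_
        calc (m.divisors.filter (fun t => e < t)).card ≤ (Finset.Icc 1 m).card :=
              Finset.card_le_card hsub
          _ = m := by rw [Nat.card_Icc]; omega

lemma dvd_sub_iff_mod_eq {E j m : ℕ} (h : j ≤ m) : E ∣ (m - j) ↔ j % E = m % E := by
  constructor
  · rintro ⟨c, hc⟩
    have hm : m = E * c + j := by omega
    rw [hm, Nat.mul_add_mod]
  · intro hmod
    have h1 := Nat.div_add_mod m E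
    have h2 := Nat.div_add_mod j E
    have h3 : j / E ≤ m / E := Nat.div_le_div_right h
    refine ⟨m / E - j / E, ?_⟩
    rw [Nat.mul_sub]
    omega

lemma div_add_div_le {a b c : ℕ} (hc : 0 < c) : a / c + b / c ≤ (a + b) / c := by
  rw [Nat.le_div_iff_mul_le hc, add_mul]
  exact Nat.add_le_add (Nat.div_mul_le_self a c) (Nat.div_mul_le_self b c)

lemma k_add_s_le (E n r : ℕ) (hr : r < E) :
    (E*n + r)/(E+1) + (n - E)/(E+1) ≤ n := by
  set k := (E*n + r)/(E+1) with hk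
  set s := (n - E)/(E+1) with hs
  have h1 : k * (E+1) ≤ E*n + r := Nat.div_mul_le_self _ _
  have h2 : s * (E+1) ≤ n - E := Nat.div_mul_le_self _ _
  by_contra hcon
  push_neg at hcon
  have h3 : (n+1) * (E+1) ≤ (k + s) * (E+1) := Nat.mul_le_mul_right _ hcon
  have h4 : (k+s)*(E+1) = k*(E+1) + s*(E+1) := by ring
  have h5 : (n+1)*(E+1) = E*n + n + E + 1 := by ring
  omega

lemma n_le_bound (E n : ℕ) : n ≤ (E+1) * ((n - E)/(E+1)) + 2*E := by
  have h1 := Nat.div_add_mod (n - E) (E+1)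
  have h2 : (n - E) % (E+1) < E + 1 := Nat.mod_lt _ (Nat.succ_pos E)
  omega

lemma m_le_bound (E n r : ℕ) (hr : r < E) :
    E*n + r ≤ E*(E+1)*((n-E)/(E+1)) + (2*E^2 + E) := by
  have h := n_le_bound E n
  have h2 : E*n ≤ E*((E+1)*((n-E)/(E+1)) + 2*E) := Nat.mul_le_mul_left E h
  have h3 : E*((E+1)*((n-E)/(E+1)) + 2*E) = E*(E+1)*((n-E)/(E+1)) + 2*E^2 := by ring
  omega

/-! ### Golden ratio facts -/

lemma fibc_eq (n : ℕ) : (Nat.fib n : ℂ) =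
    (((goldenRatio:ℝ):ℂ) ^ n - ((goldenConj:ℝ):ℂ) ^ n) / ((Real.sqrt 5 : ℝ):ℂ) := by
  rw [show ((Nat.fib n : ℂ)) = Complex.ofReal ((Nat.fib n : ℝ)) by rw [Complex.ofReal_natCast]]
  rw [Real.coe_fib_eq n, Complex.ofReal_div, Complex.ofReal_sub, Complex.ofReal_pow,
    Complex.ofReal_pow]

lemma fib_le_gold_pow (k : ℕ) : (Nat.fib k : ℝ) ≤ goldenRatio ^ k := by
  have hs : Real.sqrt 5 ^ 2 = 5 := Real.sq_sqrt (by norm_num)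
  have hs0 : (0:ℝ) < Real.sqrt 5 := Real.sqrt_pos.mpr (by norm_num)
  have h1 : (1:ℝ) ≤ goldenRatio ^ k := one_le_pow₀ Real.one_lt_goldenRatio.le
  have h2 : |goldenConj ^ k| ≤ 1 := by
    rw [abs_pow]
    refine pow_le_one₀ (abs_nonneg _) ?_
    rw [abs_le]; constructor <;> nlinarith [Real.goldenConj_neg, Real.neg_one_lt_goldenConj]
  rw [Real.coe_fib_eq, div_le_iff₀ hs0]
  have h3 := abs_le.mp h2
  nlinarith

lemma goldc_ne : ((goldenRatio:ℝ):ℂ) ≠ 0 := by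
  exact_mod_cast Complex.ofReal_ne_zero.mpr Real.goldenRatio_ne_zero

lemma s5c_ne : ((Real.sqrt 5 : ℝ):ℂ) ≠ 0 :=
  Complex.ofReal_ne_zero.mpr (by positivity)

lemma ratio_norm_lt_one : ‖((goldenConj : ℝ) : ℂ) * ((goldenRatio : ℝ) : ℂ)⁻¹‖ < 1 := by
  rw [norm_mul, norm_inv, Complex.norm_real, Complex.norm_real, Real.norm_eq_abs,
    Real.norm_eq_abs]
  have h1 : |goldenConj| < 1 := by
    rw [abs_lt]; constructor
    · exact Real.neg_one_lt_goldenConj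
    · nlinarith [Real.goldenConj_neg]
  have h3 : (1:ℝ) < goldenRatio := Real.one_lt_goldenRatio
  have h4 : (0:ℝ) ≤ |goldenConj| := abs_nonneg _
  have h5 : goldenRatio⁻¹ < 1 := by rw [inv_lt_one_iff₀]; right; exact h3
  have h6 : (0:ℝ) < goldenRatio⁻¹ := by positivity
  rw [abs_of_pos Real.goldenRatio_pos]; nlinarith

lemma psi_abs_lt_one : |goldenConj| < 1 := by
  rw [abs_lt]; constructor
  · exact Real.neg_one_lt_goldenConj
  · nlinarith [Real.goldenConj_neg]

/-! ### Main sequences -/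

/-- `Sq Q e m = ∑_{j ≤ deg Q} q_j · Ce e (m - j)`. -/
noncomputable def Sq (Q : Polynomial ℂ) (e m : ℕ) : ℂ :=
  ∑ j ∈ Finset.range (Q.natDegree + 1), Q.coeff j * (Ce e (m - j) : ℂ)

/-- The "peeled-off" pure Fibonacci part at scale `E`. -/
noncomputable def Dq (Q : Polynomial ℂ) (E m : ℕ) : ℂ :=
  ∑ j ∈ Finset.range (Q.natDegree + 1),
    if j % E = m % E then Q.coeff j * (Nat.fib ((m - j) / E) : ℂ) else 0

/-- The linear relation that is forced to vanish. -/
noncomputable def Bq (Q : Polynomial ℂ) (E r : ℕ) : ℂ :=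
  ∑ j ∈ Finset.range (Q.natDegree + 1),
    if j % E = r then Q.coeff j * ((goldenRatio:ℝ):ℂ)⁻¹ ^ (j / E) else 0

lemma Sq_split (Q : Polynomial ℂ) (e m : ℕ) (hm : Q.natDegree + 1 ≤ m) :
    Sq Q e m = Sq Q (e+1) m + Dq Q (e+1) m := by
  unfold Sq Dq
  rw [← Finset.sum_add_distrib]
  refine Finset.sum_congr rfl fun j hj => ?_
  rw [Finset.mem_range] at hj
  have hj' : j ≤ m := by omega
  have hmj : m - j ≠ 0 := by omega
  rw [Ce_succ e (m - j) hmj]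
  have hcond : ((e+1) ∣ (m - j)) = (j % (e+1) = m % (e+1)) :=
    propext (dvd_sub_iff_mod_eq hj')
  push_cast [Nat.cast_add]
  rw [mul_add]
  congr 1
  rw [mul_ite, mul_zero]
  exact if_congr (dvd_sub_iff_mod_eq hj') rfl rfl

/-! ### Limits -/

open Filter

lemma fib_mul_tendsto (i : ℕ) :
    Tendsto (fun n : ℕ => (Nat.fib (n - i) : ℂ) * ((goldenRatio:ℝ):ℂ)⁻¹ ^ n) atTop
      (nhds (((Real.sqrt 5 : ℝ):ℂ)⁻¹ * ((goldenRatio:ℝ):ℂ)⁻¹ ^ i)) := by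
  have h0 : Tendsto (fun t : ℕ => (((goldenConj:ℝ):ℂ) * ((goldenRatio:ℝ):ℂ)⁻¹) ^ t) atTop
      (nhds 0) := tendsto_pow_atTop_nhds_zero_of_norm_lt_one ratio_norm_lt_one
  have hf : Tendsto (fun t : ℕ => ((Real.sqrt 5 : ℝ):ℂ)⁻¹ * ((goldenRatio:ℝ):ℂ)⁻¹ ^ i *
      (1 - (((goldenConj:ℝ):ℂ) * ((goldenRatio:ℝ):ℂ)⁻¹) ^ t)) atTop
      (nhds (((Real.sqrt 5 : ℝ):ℂ)⁻¹ * ((goldenRatio:ℝ):ℂ)⁻¹ ^ i)) := by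
    have h1 := (tendsto_const_nhds (x := (1:ℂ)) (f := atTop)).sub h0
    have h2 := h1.const_mul (((Real.sqrt 5 : ℝ):ℂ)⁻¹ * ((goldenRatio:ℝ):ℂ)⁻¹ ^ i)
    simpa using h2
  have hcomp := hf.comp (tendsto_sub_atTop_nat i)
  refine hcomp.congr' ?_
  filter_upwards [eventually_ge_atTop i] with n hn
  simp only [Function.comp]
  rw [fibc_eq]
  have hn' : n = (n - i) + i := by omega
  rw [show ((goldenRatio:ℝ):ℂ)⁻¹ ^ n = ((goldenRatio:ℝ):ℂ)⁻¹ ^ (n-i) * ((goldenRatio:ℝ):ℂ)⁻¹ ^ i by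
    conv_lhs => rw [hn']
    rw [pow_add]]
  have key : ((goldenRatio:ℝ):ℂ) ^ (n-i) * ((goldenRatio:ℝ):ℂ)⁻¹ ^ (n-i) = 1 := by
    rw [← mul_pow, mul_inv_cancel₀ goldc_ne, one_pow]
  rw [div_eq_mul_inv]
  linear_combination (-(((Real.sqrt 5:ℝ):ℂ)⁻¹ * ((goldenRatio:ℝ):ℂ)⁻¹ ^ i)) * key

lemma linear_geom_tendsto (a b x : ℝ) (hx0 : 0 ≤ x) (hx1 : x < 1) :
    Tendsto (fun t : ℕ => (a * t + b) * x ^ t) atTop (nhds 0) := by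
  have h1 : Tendsto (fun t : ℕ => (t:ℝ) * x ^ t) atTop (nhds 0) := by
    have hs := (summable_pow_mul_geometric_of_norm_lt_one 1
      (r := x) (by rwa [Real.norm_eq_abs, abs_of_nonneg hx0])).tendsto_atTop_zero
    simpa using hs
  have h2 : Tendsto (fun t : ℕ => x ^ t) atTop (nhds 0) :=
    tendsto_pow_atTop_nhds_zero_of_lt_one hx0 hx1
  have h3 := (h1.const_mul a).add (h2.const_mul b)
  rw [mul_zero, mul_zero, add_zero] at h3
  exact h3.congr fun t => by ring

lemma nat_div_tendsto_atTop (c K : ℕ) (hc : 0 < c) :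
    Tendsto (fun m : ℕ => (m - K) / c) atTop atTop := by
  refine Filter.tendsto_atTop.mpr fun b => ?_
  filter_upwards [eventually_ge_atTop (c * b + K)] with m hm
  rw [Nat.le_div_iff_mul_le hc]
  have h : b * c = c * b := Nat.mul_comm b c
  omega

lemma norm_Sq_le (Q : Polynomial ℂ) (E m : ℕ) :
    ‖Sq Q E m‖ ≤ (∑ j ∈ Finset.range (Q.natDegree+1), ‖Q.coeff j‖)
      * ((m * Nat.fib (m / (E+1)) : ℕ) : ℝ) := by
  unfold Sq
  refine le_trans (norm_sum_le _ _) ?_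
  rw [Finset.sum_mul]
  refine Finset.sum_le_sum fun j hj => ?_
  rw [norm_mul, Complex.norm_natCast]
  refine mul_le_mul_of_nonneg_left ?_ (norm_nonneg _)
  have h1 : Ce E (m - j) ≤ (m - j) * Nat.fib ((m - j)/(E+1)) := Ce_le E (m - j)
  have h2 : (m - j) * Nat.fib ((m-j)/(E+1)) ≤ m * Nat.fib (m/(E+1)) :=
    Nat.mul_le_mul (Nat.sub_le m j) (Nat.fib_mono (Nat.div_le_div_right (Nat.sub_le m j)))
  exact_mod_cast le_trans h1 h2

lemma pow_mul_inv_le {k s n : ℕ} (h : k + s ≤ n) :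
    goldenRatio ^ k * (goldenRatio⁻¹) ^ n ≤ (goldenRatio⁻¹) ^ s := by
  have h1 : (goldenRatio⁻¹ : ℝ)^n = goldenRatio⁻¹^k * goldenRatio⁻¹^(n-k) := by
    rw [← pow_add]
    congr 1
    omega
  rw [h1, ← mul_assoc, ← mul_pow, mul_inv_cancel₀ (ne_of_gt Real.goldenRatio_pos), one_pow, one_mul]
  refine pow_le_pow_of_le_one (inv_nonneg.mpr Real.goldenRatio_pos.le) ?_ (by omega)
  rw [inv_le_one_iff₀]; right; exact Real.one_lt_goldenRatio.le

lemma SqE_mul_tendsto (Q : Polynomial ℂ) {E r : ℕ} (hE : 0 < E) (hr : r < E) :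
    Tendsto (fun n => Sq Q E (E*n + r) * ((goldenRatio:ℝ):ℂ)⁻¹ ^ n) atTop (nhds 0) := by
  set Cq := ∑ j ∈ Finset.range (Q.natDegree+1), ‖Q.coeff j‖ with hCq
  have hCq0 : 0 ≤ Cq := Finset.sum_nonneg fun _ _ => norm_nonneg _
  set a : ℝ := Cq * (E*(E+1)) with ha
  set b : ℝ := Cq * (2*E^2 + E) with hb
  have hx0 : (0:ℝ) ≤ goldenRatio⁻¹ := inv_nonneg.mpr Real.goldenRatio_pos.le
  have hx1 : (goldenRatio⁻¹ : ℝ) < 1 := by rw [inv_lt_one_iff₀]; right; exact Real.one_lt_goldenRatio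
  have hg : Tendsto (fun n : ℕ => (a * ((n - E)/(E+1) : ℕ) + b)
      * (goldenRatio⁻¹:ℝ) ^ ((n - E)/(E+1))) atTop (nhds 0) :=
    (linear_geom_tendsto a b _ hx0 hx1).comp (nat_div_tendsto_atTop (E+1) E (Nat.succ_pos E))
  refine squeeze_zero_norm (fun n => ?_) hg
  have hbig : ‖Sq Q E (E*n+r) * ((goldenRatio:ℝ):ℂ)⁻¹ ^ n‖
      = ‖Sq Q E (E*n+r)‖ * (goldenRatio⁻¹:ℝ) ^ n := by
    rw [norm_mul, norm_pow, norm_inv, Complex.norm_real, Real.norm_eq_abs,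
      abs_of_pos Real.goldenRatio_pos]
  rw [hbig]
  set s := (n - E)/(E+1) with hs
  set k := (E*n + r)/(E+1) with hk
  set M : ℝ := ((E*n+r : ℕ) : ℝ) with hM
  have hM0 : 0 ≤ M := Nat.cast_nonneg _
  set Fk : ℝ := ((Nat.fib k : ℕ) : ℝ) with hFk
  have hFk0 : 0 ≤ Fk := Nat.cast_nonneg _
  have hsplitcast : (((E*n+r) * Nat.fib ((E*n+r)/(E+1)) : ℕ) : ℝ) = M * Fk := by
    rw [hM, hFk, ← hk]
    push_cast
    ring
  have step1 : ‖Sq Q E (E*n+r)‖ * (goldenRatio⁻¹:ℝ) ^ n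
      ≤ (Cq * (M * Fk)) * (goldenRatio⁻¹:ℝ) ^ n := by
    refine mul_le_mul_of_nonneg_right ?_ (pow_nonneg hx0 n)
    rw [← hsplitcast]
    exact norm_Sq_le Q E (E*n+r)
  refine le_trans step1 ?_
  have hfib : Fk ≤ goldenRatio ^ k := fib_le_gold_pow k
  have hpm : goldenRatio ^ k * (goldenRatio⁻¹:ℝ) ^ n ≤ (goldenRatio⁻¹:ℝ) ^ s :=
    pow_mul_inv_le (k_add_s_le E n r hr)
  have step2 : (Cq * (M * Fk)) * (goldenRatio⁻¹:ℝ) ^ n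
      ≤ Cq * M * ((goldenRatio⁻¹:ℝ) ^ s) := by
    calc (Cq * (M * Fk)) * (goldenRatio⁻¹:ℝ) ^ n
        ≤ (Cq * (M * goldenRatio ^ k)) * (goldenRatio⁻¹:ℝ) ^ n := by
          refine mul_le_mul_of_nonneg_right ?_ (pow_nonneg hx0 n)
          exact mul_le_mul_of_nonneg_left (mul_le_mul_of_nonneg_left hfib hM0) hCq0
      _ = Cq * M * (goldenRatio ^ k * (goldenRatio⁻¹:ℝ) ^ n) := by ring
      _ ≤ Cq * M * ((goldenRatio⁻¹:ℝ) ^ s) :=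
          mul_le_mul_of_nonneg_left hpm (mul_nonneg hCq0 hM0)
  refine le_trans step2 ?_
  refine mul_le_mul_of_nonneg_right ?_ (pow_nonneg hx0 s)
  have hmb' : M ≤ (E*(E+1) : ℕ) * (s : ℝ) + ((2*E^2 + E : ℕ) : ℝ) := by
    rw [hM, hs]
    exact_mod_cast m_le_bound E n r hr
  calc Cq * M ≤ Cq * ((E*(E+1) : ℕ) * (s : ℝ) + ((2*E^2 + E : ℕ) : ℝ)) :=
        mul_le_mul_of_nonneg_left hmb' hCq0
    _ = a * (s : ℝ) + b := by rw [ha, hb]; push_cast; ring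

lemma Dq_mul_tendsto (Q : Polynomial ℂ) {E r : ℕ} (hE : 0 < E) (hr : r < E) :
    Tendsto (fun n => Dq Q E (E*n + r) * ((goldenRatio:ℝ):ℂ)⁻¹ ^ n) atTop
      (nhds (((Real.sqrt 5:ℝ):ℂ)⁻¹ * Bq Q E r)) := by
  have htarget : ((Real.sqrt 5:ℝ):ℂ)⁻¹ * Bq Q E r
      = ∑ j ∈ Finset.range (Q.natDegree+1),
          (if j % E = r then Q.coeff j * (((Real.sqrt 5:ℝ):ℂ)⁻¹ * ((goldenRatio:ℝ):ℂ)⁻¹ ^ (j / E))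
           else 0) := by
    unfold Bq
    rw [Finset.mul_sum]
    refine Finset.sum_congr rfl fun j _ => ?_
    rw [mul_ite, mul_zero]
    split_ifs with hc
    · ring
    · rfl
  rw [htarget]
  have hterm : ∀ j ∈ Finset.range (Q.natDegree+1),
      Tendsto (fun n : ℕ => if j % E = r then
          Q.coeff j * ((Nat.fib (n - j/E) : ℂ) * ((goldenRatio:ℝ):ℂ)⁻¹ ^ n) else 0) atTop
        (nhds (if j % E = r then
          Q.coeff j * (((Real.sqrt 5:ℝ):ℂ)⁻¹ * ((goldenRatio:ℝ):ℂ)⁻¹ ^ (j/E)) else 0)) := by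
    intro j _
    split_ifs with hc
    · exact (fib_mul_tendsto (j/E)).const_mul _
    · exact tendsto_const_nhds
  refine (tendsto_finset_sum _ hterm).congr' ?_
  filter_upwards [eventually_ge_atTop (Q.natDegree + 1)] with n hn
  unfold Dq
  rw [Finset.sum_mul]
  refine Finset.sum_congr rfl fun j hj => ?_
  rw [Finset.mem_range] at hj
  have hmod : (E * n + r) % E = r := by rw [Nat.mul_add_mod, Nat.mod_eq_of_lt hr]
  rw [hmod, ite_mul, zero_mul]
  split_ifs with hc
  · have hj2 : E * (j / E) + r = j := by rw [← hc]; exact Nat.div_add_mod j E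
    have hin : j / E ≤ n := le_trans (Nat.div_le_self j E) (by omega)
    have hEi : E * (j/E) ≤ E * n := Nat.mul_le_mul_left E hin
    have harg : E * n + r - j = E * (n - j / E) := by rw [Nat.mul_sub]; omega
    rw [harg, Nat.mul_div_cancel_left _ hE, mul_assoc]
  · rfl

lemma Dq_tendsto_zero (Q : Polynomial ℂ) {E : ℕ} (hE : 0 < E)
    (hB : ∀ r < E, Bq Q E r = 0) : Tendsto (Dq Q E) atTop (nhds 0) := by
  set K := Q.natDegree with hK
  set Cq := ∑ j ∈ Finset.range (K+1), ‖Q.coeff j‖ with hCq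
  have hCq0 : 0 ≤ Cq := Finset.sum_nonneg fun _ _ => norm_nonneg _
  have hρ0 : (0:ℝ) ≤ |goldenConj| := abs_nonneg _
  have hρ1 : |goldenConj| < 1 := psi_abs_lt_one
  have hid : ∀ m : ℕ, K ≤ m → Dq Q E m
      = -(((Real.sqrt 5:ℝ):ℂ)⁻¹ * ∑ j ∈ Finset.range (K+1),
          (if j % E = m % E then Q.coeff j * ((goldenConj:ℝ):ℂ) ^ (m/E - j/E) else 0)) := by
    intro m hm
    have hdiv : ∀ j, j < K+1 → j % E = m % E → (m - j)/E = m/E - j/E := by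
      intro j hj hc
      have hjm : j ≤ m := by omega
      have h1 := Nat.div_add_mod m E
      have h2 := Nat.div_add_mod j E
      have h3 : j / E ≤ m / E := Nat.div_le_div_right hjm
      have h4 : E * (j/E) ≤ E * (m/E) := Nat.mul_le_mul_left E h3
      have h5 : m - j = E * (m/E - j/E) := by rw [Nat.mul_sub]; omega
      rw [h5, Nat.mul_div_cancel_left _ hE]
    have hsum1 : ∑ j ∈ Finset.range (K+1),
        (if j % E = m % E then Q.coeff j * ((goldenRatio:ℝ):ℂ) ^ (m/E - j/E) else 0)
        = ((goldenRatio:ℝ):ℂ)^(m/E) * Bq Q E (m % E) := by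
      unfold Bq
      rw [← hK, Finset.mul_sum]
      refine Finset.sum_congr rfl fun j hj => ?_
      rw [mul_ite, mul_zero]
      split_ifs with hc
      · rw [Finset.mem_range] at hj
        have h3 : j / E ≤ m / E := Nat.div_le_div_right (by omega)
        rw [pow_sub₀ _ goldc_ne h3, ← inv_pow]
        ring
      · rfl
    have hstep : Dq Q E m = ∑ j ∈ Finset.range (K+1),
        (if j % E = m % E then
          Q.coeff j * ((((goldenRatio:ℝ):ℂ) ^ (m/E - j/E) - ((goldenConj:ℝ):ℂ) ^ (m/E - j/E))
            * ((Real.sqrt 5:ℝ):ℂ)⁻¹) else 0) := by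
      unfold Dq
      rw [← hK]
      refine Finset.sum_congr rfl fun j hj => ?_
      rw [Finset.mem_range] at hj
      split_ifs with hc
      · rw [hdiv j (by omega) hc, fibc_eq, div_eq_mul_inv]
      · rfl
    rw [hstep]
    have hsplit : ∑ j ∈ Finset.range (K+1),
        (if j % E = m % E then
          Q.coeff j * ((((goldenRatio:ℝ):ℂ) ^ (m/E - j/E) - ((goldenConj:ℝ):ℂ) ^ (m/E - j/E))
            * ((Real.sqrt 5:ℝ):ℂ)⁻¹) else 0)
        = ((Real.sqrt 5:ℝ):ℂ)⁻¹ * (∑ j ∈ Finset.range (K+1),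
            (if j % E = m % E then Q.coeff j * ((goldenRatio:ℝ):ℂ) ^ (m/E - j/E) else 0))
          - ((Real.sqrt 5:ℝ):ℂ)⁻¹ * (∑ j ∈ Finset.range (K+1),
            (if j % E = m % E then Q.coeff j * ((goldenConj:ℝ):ℂ) ^ (m/E - j/E) else 0)) := by
      rw [Finset.mul_sum, Finset.mul_sum, ← Finset.sum_sub_distrib]
      refine Finset.sum_congr rfl fun j _ => ?_
      split_ifs with hc
      · ring
      · simp
    rw [hsplit, hsum1, hB (m % E) (Nat.mod_lt m hE), mul_zero, mul_zero, zero_sub]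
  refine squeeze_zero_norm' (a := fun m => Cq * |goldenConj| ^ ((m - K)/E)) ?_ ?_
  · filter_upwards [eventually_ge_atTop K] with m hm
    rw [hid m hm, norm_neg, norm_mul]
    have hs1 : ‖((Real.sqrt 5:ℝ):ℂ)⁻¹‖ ≤ 1 := by
      rw [norm_inv, Complex.norm_real, Real.norm_eq_abs,
        abs_of_pos (Real.sqrt_pos.mpr (by norm_num : (0:ℝ) < 5))]
      rw [inv_le_one_iff₀]
      right
      have : (1:ℝ) = Real.sqrt 1 := (Real.sqrt_one).symm
      rw [this]
      exact Real.sqrt_le_sqrt (by norm_num)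
    have hs2 : ‖∑ j ∈ Finset.range (K+1),
        (if j % E = m % E then Q.coeff j * ((goldenConj:ℝ):ℂ) ^ (m/E - j/E) else 0)‖
        ≤ Cq * |goldenConj| ^ ((m - K)/E) := by
      refine le_trans (norm_sum_le _ _) ?_
      rw [hCq, Finset.sum_mul]
      refine Finset.sum_le_sum fun j hj => ?_
      rw [Finset.mem_range] at hj
      split_ifs with hc
      · rw [norm_mul, norm_pow, Complex.norm_real, Real.norm_eq_abs]
        refine mul_le_mul_of_nonneg_left ?_ (norm_nonneg _)
        refine pow_le_pow_of_le_one hρ0 hρ1.le ?_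
        -- (m - K)/E ≤ m/E - j/E
        have h6 : (m-K)/E + j/E ≤ m/E := by
          have h7 : j / E ≤ K / E := Nat.div_le_div_right (by omega)
          have h9 : (m - K) + K = m := by omega
          have h8 : (m-K)/E + K/E ≤ m/E := by
            have h10 := div_add_div_le (a := m-K) (b := K) hE
            rwa [h9] at h10
          omega
        omega
      · rw [norm_zero]; positivity
    calc ‖((Real.sqrt 5:ℝ):ℂ)⁻¹‖ * ‖∑ j ∈ Finset.range (K+1),
        (if j % E = m % E then Q.coeff j * ((goldenConj:ℝ):ℂ) ^ (m/E - j/E) else 0)‖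
        ≤ 1 * (Cq * |goldenConj| ^ ((m - K)/E)) := by
          refine mul_le_mul hs1 hs2 (norm_nonneg _) (by norm_num)
      _ = Cq * |goldenConj| ^ ((m - K)/E) := one_mul _
  · have h1 : Tendsto (fun t : ℕ => Cq * |goldenConj| ^ t) atTop (nhds 0) := by
      have := (tendsto_pow_atTop_nhds_zero_of_lt_one hρ0 hρ1).const_mul Cq
      simpa using this
    exact h1.comp (nat_div_tendsto_atTop E K hE)

lemma Bq_vanish (Q : Polynomial ℂ) {E r : ℕ} (hE : 0 < E) (hr : r < E)
    (hH : Tendsto (fun m => Sq Q (E-1) m) atTop (nhds 0)) : Bq Q E r = 0 := by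
  have hle : ∀ n : ℕ, n ≤ E * n + r := fun n =>
    le_trans (Nat.le_mul_of_pos_left n hE) (Nat.le_add_right _ _)
  have hEn : Tendsto (fun n : ℕ => E * n + r) atTop atTop :=
    tendsto_atTop_mono hle tendsto_id
  have hginv1 : (goldenRatio⁻¹:ℝ) ≤ 1 := by
    rw [inv_le_one_iff₀]; right; exact Real.one_lt_goldenRatio.le
  have hu : Tendsto (fun n => Sq Q (E-1) (E*n + r) * ((goldenRatio:ℝ):ℂ)⁻¹ ^ n) atTop
      (nhds 0) := by
    refine squeeze_zero_norm (a := fun n => ‖Sq Q (E-1) (E*n + r)‖) (fun n => ?_) ?_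
    · rw [norm_mul, norm_pow, norm_inv, Complex.norm_real, Real.norm_eq_abs,
        abs_of_pos Real.goldenRatio_pos]
      calc ‖Sq Q (E-1) (E*n+r)‖ * (goldenRatio⁻¹:ℝ) ^ n ≤ ‖Sq Q (E-1) (E*n+r)‖ * 1 := by
            refine mul_le_mul_of_nonneg_left ?_ (norm_nonneg _)
            exact pow_le_one₀ (inv_nonneg.mpr Real.goldenRatio_pos.le) hginv1
        _ = ‖Sq Q (E-1) (E*n+r)‖ := mul_one _
    · have := (hH.comp hEn).norm
      simpa using this
  have hsplit : (fun n => Sq Q (E-1) (E*n+r) * ((goldenRatio:ℝ):ℂ)⁻¹ ^ n) =ᶠ[atTop]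
      (fun n => Sq Q E (E*n+r) * ((goldenRatio:ℝ):ℂ)⁻¹ ^ n
        + Dq Q E (E*n+r) * ((goldenRatio:ℝ):ℂ)⁻¹ ^ n) := by
    filter_upwards [eventually_ge_atTop (Q.natDegree + 1)] with n hn
    have hm : Q.natDegree + 1 ≤ E*n + r := le_trans hn (hle n)
    have hs := Sq_split Q (E-1) (E*n+r) hm
    rw [show E - 1 + 1 = E by omega] at hs
    rw [hs]
    ring
  have h2 : Tendsto (fun n => Sq Q (E-1) (E*n+r) * ((goldenRatio:ℝ):ℂ)⁻¹ ^ n) atTop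
      (nhds (0 + ((Real.sqrt 5:ℝ):ℂ)⁻¹ * Bq Q E r)) :=
    ((SqE_mul_tendsto Q hE hr).add (Dq_mul_tendsto Q hE hr)).congr' hsplit.symm
  have h3 := tendsto_nhds_unique hu h2
  rw [zero_add] at h3
  have h4 : ((Real.sqrt 5:ℝ):ℂ)⁻¹ ≠ 0 := inv_ne_zero s5c_ne
  rcases mul_eq_zero.mp h3.symm with h | h
  · exact absurd h h4
  · exact h

lemma eval_root (Q : Polynomial ℂ) {E : ℕ} (hE : 0 < E) (hB : ∀ r < E, Bq Q E r = 0) :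
    Q.eval (((goldenRatio ^ (-(1/(E:ℝ))) : ℝ) : ℂ)) = 0 := by
  set x : ℝ := goldenRatio ^ (-(1/(E:ℝ))) with hx
  have hE0 : (E:ℝ) ≠ 0 := Nat.cast_ne_zero.mpr (by omega)
  have hxE : ((x:ℝ):ℂ)^E = ((goldenRatio:ℝ):ℂ)⁻¹ := by
    have hr : x ^ (E:ℕ) = goldenRatio⁻¹ := by
      rw [hx, ← Real.rpow_natCast (goldenRatio ^ (-(1/(E:ℝ)))) E, ← Real.rpow_mul Real.goldenRatio_pos.le]
      rw [show (-(1/(E:ℝ))) * E = -1 by field_simp]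
      exact Real.rpow_neg_one goldenRatio
    calc ((x:ℝ):ℂ)^E = (((x^E : ℝ)):ℂ) := by rw [Complex.ofReal_pow]
      _ = ((goldenRatio⁻¹:ℝ):ℂ) := by rw [hr]
      _ = ((goldenRatio:ℝ):ℂ)⁻¹ := Complex.ofReal_inv _
  rw [Polynomial.eval_eq_sum_range]
  rw [← Finset.sum_fiberwise_of_maps_to (g := fun j => j % E) (t := Finset.range E)
      (fun j _ => Finset.mem_range.mpr (Nat.mod_lt j hE)) _]
  refine Finset.sum_eq_zero fun r hrE => ?_
  rw [Finset.mem_range] at hrE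
  have key : ∑ j ∈ (Finset.range (Q.natDegree+1)).filter (fun j => j % E = r),
      Q.coeff j * ((x:ℂ))^j = ((x:ℂ))^r * Bq Q E r := by
    rw [Finset.sum_filter]
    unfold Bq
    rw [Finset.mul_sum]
    refine Finset.sum_congr rfl fun j _ => ?_
    rw [mul_ite, mul_zero]
    split_ifs with hc
    · have hj2 : E * (j / E) + r = j := by rw [← hc]; exact Nat.div_add_mod j E
      have hxj : ((x:ℝ):ℂ)^j = ((goldenRatio:ℝ):ℂ)⁻¹ ^ (j/E) * ((x:ℝ):ℂ)^r := by
        rw [← hj2, pow_add, pow_mul, hxE, hj2]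
      rw [hxj]
      ring
    · rfl
  rw [key, hB r hrE, mul_zero]

lemma Sq_zero_eventually (P Q : Polynomial ℂ) (L : PowerSeries ℂ)
    (hL : ∀ m, (PowerSeries.coeff (R := ℂ) m) L = (Afib m : ℂ))
    (hQL : (Q : PowerSeries ℂ) * L = (P : PowerSeries ℂ)) :
    ∀ᶠ m in atTop, Sq Q 0 m = 0 := by
  filter_upwards [eventually_ge_atTop (Q.natDegree + P.natDegree + 1)] with m hm
  have hK : Q.natDegree + 1 ≤ m + 1 := by omega
  have h1 : (PowerSeries.coeff (R := ℂ) m) ((Q : PowerSeries ℂ) * L) = Sq Q 0 m := by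
    rw [PowerSeries.coeff_mul, Finset.Nat.sum_antidiagonal_eq_sum_range_succ_mk]
    rw [← Finset.sum_subset (Finset.range_subset_range.mpr hK)]
    · unfold Sq
      refine Finset.sum_congr rfl fun j hj => ?_
      rw [Polynomial.coeff_coe, hL, Ce_zero]
    · intro k hk1 hk2
      rw [Finset.mem_range, not_lt] at hk2
      rw [Polynomial.coeff_coe, Polynomial.coeff_eq_zero_of_natDegree_lt (by omega), zero_mul]
  rw [← h1, hQL, Polynomial.coeff_coe]
  exact Polynomial.coeff_eq_zero_of_natDegree_lt (by omega)

lemma F_eq_fib (F : ℕ → ℂ) (h1 : F 1 = 1) (h2 : F 2 = 1)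
    (hrec : ∀ n : ℕ, 1 ≤ n → F (n + 2) = F (n + 1) + F n) :
    ∀ n, 1 ≤ n → F n = (Nat.fib n : ℂ) := by
  intro n
  induction n using Nat.strong_induction_on with
  | _ n ih =>
    intro hn
    match n, hn with
    | 1, _ => simpa using h1
    | 2, _ => rw [h2]; norm_num [Nat.fib]
    | (k+3), _ =>
      have e1 := ih (k+2) (by omega) (by omega)
      have e2 := ih (k+1) (by omega) (by omega)
      have hr := hrec (k+1) (by omega)
      have hf : Nat.fib (k+3) = Nat.fib (k+1) + Nat.fib (k+2) := Nat.fib_add_two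
      calc F (k+3) = F (k+2) + F (k+1) := hr
        _ = (Nat.fib (k+2) : ℂ) + (Nat.fib (k+1) : ℂ) := by rw [e1, e2]
        _ = (Nat.fib (k+3) : ℂ) := by rw [hf]; push_cast; ring

lemma lambert_coeff (F : ℕ → ℂ) (hF : ∀ n, 1 ≤ n → F n = (Nat.fib n : ℂ)) (m : ℕ) :
    (PowerSeries.coeff (R := ℂ) m) (LambertSeries F) = (Afib m : ℂ) := by
  rw [LambertSeries, PowerSeries.coeff_mk]
  have h1 : Afib m = ∑ d ∈ m.divisors, Nat.fib d := Nat.sum_div_divisors m Nat.fib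
  rw [h1, Nat.cast_sum]
  refine Finset.sum_congr rfl fun d hd => ?_
  exact hF d (Nat.pos_of_mem_divisors hd)

end Stmt17Aux

open Real (goldenRatio goldenConj)

/-- The Lambert series of the Fibonacci sequence is not rational. -/
theorem stmt_17 (F : ℕ → ℂ) (h1 : F 1 = 1) (h2 : F 2 = 1)
    (hrec : ∀ n : ℕ, 1 ≤ n → F (n + 2) = F (n + 1) + F n) :
    ¬ IsRationalPS (LambertSeries F) := by
  rintro ⟨P, Q, hQ0, hQL⟩
  have hFfib := Stmt17Aux.F_eq_fib F h1 h2 hrec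
  have hcoeff := Stmt17Aux.lambert_coeff F hFfib
  have hbase : Filter.Tendsto (fun m => Stmt17Aux.Sq Q 0 m) Filter.atTop (nhds 0) := by
    have h := Stmt17Aux.Sq_zero_eventually P Q (LambertSeries F) hcoeff hQL
    refine Filter.Tendsto.congr' ?_ tendsto_const_nhds
    filter_upwards [h] with m hm
    exact hm.symm
  have key : ∀ e, Filter.Tendsto (fun m => Stmt17Aux.Sq Q e m) Filter.atTop (nhds 0) := by
    intro e
    induction e with
    | zero => exact hbase
    | succ e ih =>
      have hB : ∀ r < e+1, Stmt17Aux.Bq Q (e+1) r = 0 := fun r hr =>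
        Stmt17Aux.Bq_vanish Q (Nat.succ_pos e) hr ih
      have hD := Stmt17Aux.Dq_tendsto_zero Q (Nat.succ_pos e) hB
      have h2' : Filter.Tendsto (fun m => Stmt17Aux.Sq Q e m - Stmt17Aux.Dq Q (e+1) m)
          Filter.atTop (nhds 0) := by
        have h3 := ih.sub hD
        simpa using h3
      refine Filter.Tendsto.congr' ?_ h2'
      filter_upwards [Filter.eventually_ge_atTop (Q.natDegree + 1)] with m hm
      rw [Stmt17Aux.Sq_split Q e m hm]
      ring
  have hroot : ∀ E : ℕ, Q.IsRoot (((goldenRatio ^ (-(1/(((E:ℕ)+1:ℕ):ℝ))) : ℝ) : ℂ)) := by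
    intro E
    have hB : ∀ r < E+1, Stmt17Aux.Bq Q (E+1) r = 0 := fun r hr =>
      Stmt17Aux.Bq_vanish Q (Nat.succ_pos E) hr (key E)
    exact Stmt17Aux.eval_root Q (Nat.succ_pos E) hB
  have hmono : StrictMono (fun E : ℕ => (goldenRatio ^ (-(1/(((E:ℕ)+1:ℕ):ℝ))) : ℝ)) := by
    intro a b hab
    rw [Real.rpow_lt_rpow_left_iff Real.one_lt_goldenRatio, neg_lt_neg_iff]
    have ha0 : (0:ℝ) < ((a:ℕ)+1:ℕ) := by positivity
    rw [div_lt_div_iff₀ (by positivity) ha0]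
    have : ((a:ℕ)+1:ℕ) < (((b:ℕ)+1:ℕ) : ℝ) := by exact_mod_cast Nat.succ_lt_succ hab
    nlinarith
  have hinj : Function.Injective
      (fun E : ℕ => (((goldenRatio ^ (-(1/(((E:ℕ)+1:ℕ):ℝ))) : ℝ)) : ℂ)) := by
    intro a b hab
    exact hmono.injective (Complex.ofReal_injective hab)
  have hinf : Set.Infinite {x : ℂ | Q.IsRoot x} :=
    Set.infinite_of_injective_forall_mem hinj hroot
  have hQz := Polynomial.eq_zero_of_infinite_isRoot Q hinf
  rw [hQz] at hQ0
  simp at hQ0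
end
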